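/- For every positive integer n, the number of distinct one-dimensional subspaces of ℂ^{𝔽₂ⁿ} spanned by stabilizer state vectors equals 2ⁿ·∏_{k=1}^n (2^k + 1). -/

import Mathlib

open scoped BigOperators Classical

noncomputable section

namespace StabPaper

/-- The space `𝔽₂ⁿ` of length-`n` bitstrings. -/
abbrev F2 (n : ℕ) := Fin n → ZMod 2

/-- `A ⊆ 𝔽₂ⁿ` is a (nonempty) affine linear subspace. -/
def IsAffineSubspace {n : ℕ} (A : Set (F2 n)) : Prop :=
  A.Nonempty ∧ ∀ x ∈ A, ∀ y ∈ A, ∀ z ∈ A, x + y + z ∈ A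

/-- `l : 𝔽₂ⁿ → 𝔽₂` is a linear form. -/
def IsLinearForm {n : ℕ} (l : F2 n → ZMod 2) : Prop :=
  ∀ x y, l (x + y) = l x + l y

/-- `q : 𝔽₂ⁿ → 𝔽₂` is a quadratic form (polynomial of degree at most 2
with vanishing constant term). -/
def IsQuadraticForm {n : ℕ} (q : F2 n → ZMod 2) : Prop :=
  q 0 = 0 ∧ ∀ x y z, q (x + y + z) = q (x + y) + q (x + z) + q (y + z) + q x + q y + q z

/-- A stabilizer state vector on `n` qubits. -/
def IsStabilizerState {n : ℕ} (σ : F2 n → ℂ) : Prop :=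
  ∃ (A : Set (F2 n)) (l q : F2 n → ZMod 2),
    IsAffineSubspace A ∧ IsLinearForm l ∧ IsQuadraticForm q ∧
    ∀ x, σ x = if x ∈ A then Complex.I ^ (l x).val * (-1 : ℂ) ^ (q x).val else 0

/-- A real stabilizer state vector on `n` qubits (the case `l = 0`). -/
def IsRealStabilizerState {n : ℕ} (σ : F2 n → ℂ) : Prop :=
  ∃ (A : Set (F2 n)) (q : F2 n → ZMod 2),
    IsAffineSubspace A ∧ IsQuadraticForm q ∧
    ∀ x, σ x = if x ∈ A then (-1 : ℂ) ^ (q x).val else 0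

/-- The stabilizer rank: the least `r` such that `ψ` is a `ℂ`-linear combination of
`r` stabilizer state vectors. -/
def stabRank {n : ℕ} (ψ : F2 n → ℂ) : ℕ :=
  sInf {r : ℕ | ∃ (c : Fin r → ℂ) (σ : Fin r → (F2 n → ℂ)),
    (∀ i, IsStabilizerState (σ i)) ∧ ψ = ∑ i, c i • σ i}

/-- The real stabilizer rank: the least `r` such that `ψ` is a `ℂ`-linear combination of
`r` real stabilizer state vectors. -/
def realStabRank {n : ℕ} (ψ : F2 n → ℂ) : ℕ :=
  sInf {r : ℕ | ∃ (c : Fin r → ℂ) (σ : Fin r → (F2 n → ℂ)),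
    (∀ i, IsRealStabilizerState (σ i)) ∧ ψ = ∑ i, c i • σ i}

/-- The `n`-fold tensor power of a one-qubit vector `ψ : ℂ²`. -/
def tensorPow (ψ : ZMod 2 → ℂ) (n : ℕ) : F2 n → ℂ := fun x => ∏ i, ψ (x i)

/-- The Euclidean norm on `ℂ^{𝔽₂ⁿ}`. -/
def l2norm {n : ℕ} (φ : F2 n → ℂ) : ℝ := Real.sqrt (∑ x, ‖φ x‖ ^ 2)

/-- The δ-approximate stabilizer rank. -/
def approxStabRank {n : ℕ} (δ : ℝ) (ψ : F2 n → ℂ) : ℕ :=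
  sInf {r : ℕ | ∃ φ : F2 n → ℂ, φ ≠ 0 ∧
    l2norm (fun x => ((l2norm φ : ℝ) : ℂ)⁻¹ * φ x - ((l2norm ψ : ℝ) : ℂ)⁻¹ * ψ x) < δ ∧
    stabRank φ = r}

/-- The one-qubit vector `a·e₀ + b·e₁ ∈ ℂ²`. -/
def qubit (a b : ℂ) : ZMod 2 → ℂ := fun x => if x = 0 then a else b

/-- A nonzero `ψ ∈ ℂ²` is a one-qubit stabilizer state vector iff it is proportional to
one of `e₀, e₁, e₀+e₁, e₀−e₁, e₀+i·e₁, e₀−i·e₁`. -/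
def IsQubitStabVec (ψ : ZMod 2 → ℂ) : Prop :=
  ∃ c : ℂ, c ≠ 0 ∧ (ψ = c • qubit 1 0 ∨ ψ = c • qubit 0 1 ∨ ψ = c • qubit 1 1 ∨
    ψ = c • qubit 1 (-1) ∨ ψ = c • qubit 1 Complex.I ∨ ψ = c • qubit 1 (-Complex.I))

/-- The `n`-th generic stabilizer rank `χ_n`. -/
def genStabRank (n : ℕ) : ℕ :=
  sSup {r : ℕ | ∃ ψ : ZMod 2 → ℂ, ψ ≠ 0 ∧ stabRank (tensorPow ψ n) = r}

/-- The `n`-th generic real stabilizer rank `χ_nℝ`. -/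
def genRealStabRank (n : ℕ) : ℕ :=
  sSup {r : ℕ | ∃ ψ : ZMod 2 → ℂ, ψ ≠ 0 ∧ realStabRank (tensorPow ψ n) = r}


/-- The set of one-dimensional subspaces of `ℂ^{𝔽₂ⁿ}` spanned by stabilizer state
vectors (projective stabilizer states). -/
def stabLines (n : ℕ) : Set (Submodule ℂ (F2 n → ℂ)) :=
  {L | ∃ σ : F2 n → ℂ, IsStabilizerState σ ∧ L = Submodule.span ℂ {σ}}


set_option linter.unusedSectionVars false

lemma zmod2_cases (c : ZMod 2) : c = 0 ∨ c = 1 := by revert c; decide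

lemma zmod2_addself {M : Type*} [AddCommGroup M] [Module (ZMod 2) M] (x : M) : x + x = 0 := by
  have h : (2 : ZMod 2) • x = 0 := by
    rw [show (2 : ZMod 2) = 0 by decide, zero_smul]
  rwa [two_smul] at h



@[simp] lemma val_zero' : (0 : ZMod 2).val = 0 := rfl
@[simp] lemma val_one' : (1 : ZMod 2).val = 1 := rfl
@[simp] lemma val_two' : (2 : ZMod 2).val = 0 := rfl
@[simp] lemma val_three' : (3 : ZMod 2).val = 1 := rfl

/-- the phase `i^a (-1)^b` -/
def ph (a b : ZMod 2) : ℂ := Complex.I ^ a.val * (-1 : ℂ) ^ b.val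

lemma ph_ne_zero (a b : ZMod 2) : ph a b ≠ 0 := by
  rcases zmod2_cases a with rfl | rfl <;> rcases zmod2_cases b with rfl | rfl <;>
    simp [ph, Complex.I_ne_zero]

lemma ph_inj {a b a' b' : ZMod 2} (h : ph a b = ph a' b') : a = a' ∧ b = b' := by
  rcases zmod2_cases a with rfl | rfl <;> rcases zmod2_cases b with rfl | rfl <;>
    rcases zmod2_cases a' with rfl | rfl <;> rcases zmod2_cases b' with rfl | rfl <;>
    simp only [ph, val_zero', val_one', pow_zero, pow_one, one_mul, mul_one] at h <;>
    first
      | (exact ⟨rfl, rfl⟩)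
      | (exfalso; norm_num [Complex.ext_iff] at h)

lemma ph_add (a b x y : ZMod 2) : ph (a + x) (b + y + a * x) = ph a b * ph x y := by
  rcases zmod2_cases a with rfl | rfl <;> rcases zmod2_cases b with rfl | rfl <;>
    rcases zmod2_cases x with rfl | rfl <;> rcases zmod2_cases y with rfl | rfl <;>
    · norm_num [ph]
      try norm_num [Complex.ext_iff]


section QF
variable {M : Type*} [AddCommGroup M] [Module (ZMod 2) M]
variable {N : Type*} [AddCommGroup N] [Module (ZMod 2) N]

def Is3pt (q : M → ZMod 2) : Prop :=
  ∀ x y z, q (x + y + z) = q (x + y) + q (x + z) + q (y + z) + q x + q y + q z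

def IsQF (q : M → ZMod 2) : Prop := q 0 = 0 ∧ Is3pt q

private lemma zadd12 : ∀ (b c d e f g b' c' d' e' f' g' : ZMod 2),
    (b+c+d+e+f+g) + (b'+c'+d'+e'+f'+g') = (b+b')+(c+c')+(d+d')+(e+e')+(f+f')+(g+g') := by decide

lemma IsQF.add {q q' : M → ZMod 2} (h : IsQF q) (h' : IsQF q') :
    IsQF (fun x => q x + q' x) := by
  refine ⟨by simp [h.1, h'.1], fun x y z => ?_⟩
  show q (x+y+z) + q' (x+y+z) = _
  rw [h.2 x y z, h'.2 x y z]
  exact zadd12 _ _ _ _ _ _ _ _ _ _ _ _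

lemma isQF_of_additive {l : M → ZMod 2} (hl : ∀ x y, l (x + y) = l x + l y) : IsQF l := by
  have h0 : l 0 = 0 := by have := hl 0 0; simpa using this.symm
  refine ⟨h0, fun x y z => ?_⟩
  simp only [hl]
  revert x y z
  have : ∀ a b c : ZMod 2, a + b + c = (a+b)+(a+c)+(b+c)+a+b+c := by decide
  intro x y z; exact this (l x) (l y) (l z)

lemma IsQF.comp {q : N → ZMod 2} (hq : IsQF q) {g : M → N}
    (hg : ∀ x y, g (x + y) = g x + g y) : IsQF (fun x => q (g x)) := by
  have h0 : g 0 = 0 := by have := hg 0 0; simpa using this.symm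
  exact ⟨by simp [h0, hq.1], fun x y z => by simp only [hg]; exact hq.2 _ _ _⟩

def polar (q : M → ZMod 2) (s v : M) : ZMod 2 := q (s + v) + q s + q v

lemma q_add (q : M → ZMod 2) (s v : M) : q (s + v) = q s + q v + polar q s v := by
  unfold polar
  have : ∀ a s v : ZMod 2, a = s + v + (a + s + v) := by decide
  exact this _ _ _

lemma polar_comm (q : M → ZMod 2) (s v : M) : polar q s v = polar q v s := by
  unfold polar; rw [add_comm s v]
  have : ∀ a b c : ZMod 2, a + b + c = a + c + b := by decide
  exact this _ _ _

lemma polar_zero_right {q : M → ZMod 2} (hq : IsQF q) (s : M) : polar q s 0 = 0 := by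
  unfold polar
  simp [hq.1]
  have : ∀ a : ZMod 2, a + a = 0 := by decide
  exact this _

lemma polar_add_right {q : M → ZMod 2} (hq : IsQF q) (s v w : M) :
    polar q s (v + w) = polar q s v + polar q s w := by
  have h3 := hq.2 s v w
  unfold polar
  rw [← add_assoc s v w, h3]
  have : ∀ B C u s v w : ZMod 2, ((B+C+u+s+v+w) + s + u) = (B+s+v)+(C+s+w) := by decide
  exact this _ _ _ _ _ _

lemma polar_smul_right {q : M → ZMod 2} (hq : IsQF q) (s : M) (c : ZMod 2) (v : M) :
    polar q s (c • v) = c * polar q s v := by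
  rcases zmod2_cases c with rfl | rfl
  · simp [polar_zero_right hq]
  · simp

lemma polar_sum_right {q : M → ZMod 2} (hq : IsQF q) (s : M) {ι : Type*}
    (t : Finset ι) (f : ι → M) :
    polar q s (∑ i ∈ t, f i) = ∑ i ∈ t, polar q s (f i) := by
  classical
  induction t using Finset.induction_on with
  | empty => simp [polar_zero_right hq]
  | insert _ _ hnot ih => rename_i a t'
                          rw [Finset.sum_insert hnot, polar_add_right hq, ih, Finset.sum_insert hnot]

lemma additive_sum {l : M → ZMod 2} (hl : ∀ x y, l (x + y) = l x + l y) {ι : Type*}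
    (t : Finset ι) (f : ι → M) : l (∑ i ∈ t, f i) = ∑ i ∈ t, l (f i) := by
  classical
  have h0 : l 0 = 0 := by have := hl 0 0; simpa using this.symm
  induction t using Finset.induction_on with
  | empty => simp [h0]
  | insert _ _ hnot ih => rename_i a t'
                          rw [Finset.sum_insert hnot, hl, ih, Finset.sum_insert hnot]

end QF
set_option maxHeartbeats 1000000

section Std
variable {k : ℕ}

/-- standard basis vector -/
def E {k : ℕ} (i : Fin k) : Fin k → ZMod 2 := fun j => if i = j then 1 else 0

lemma addf_apply {l : (Fin k → ZMod 2) → ZMod 2} (hl : ∀ x y, l (x + y) = l x + l y)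
    (x : Fin k → ZMod 2) : l x = ∑ i, x i * l (E i) := by
  have h0 : l 0 = 0 := by have := hl 0 0; simpa using this.symm
  have hsum : ∀ (t : Finset (Fin k)) (f : Fin k → (Fin k → ZMod 2)),
      l (∑ i ∈ t, f i) = ∑ i ∈ t, l (f i) := by
    intro t f
    induction t using Finset.induction_on with
    | empty => simp [h0]
    | insert _ _ hnot ih => rename_i a t'
                            rw [Finset.sum_insert hnot, hl, ih, Finset.sum_insert hnot]
  conv_lhs => rw [pi_eq_sum_univ x]
  rw [show (∑ i, x i • fun j => if i = j then (1 : ZMod 2) else 0) = ∑ i, x i • E i from rfl]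
  rw [hsum]
  refine Finset.sum_congr rfl fun i _ => ?_
  rcases zmod2_cases (x i) with h | h <;> simp [h, h0]

/-- linear forms on the standard space are parametrized by coefficient vectors -/
def lfEquivStd (k : ℕ) :
    {l : (Fin k → ZMod 2) → ZMod 2 // ∀ x y, l (x + y) = l x + l y} ≃ (Fin k → ZMod 2) where
  toFun l := fun i => l.1 (E i)
  invFun c := ⟨fun x => ∑ i, c i * x i, fun x y => by
    simp only [Pi.add_apply, mul_add]; rw [Finset.sum_add_distrib]⟩
  left_inv := fun ⟨l, hl⟩ => by
    apply Subtype.ext; funext x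
    show (∑ i, l (E i) * x i) = l x
    rw [addf_apply hl x]
    exact Finset.sum_congr rfl fun i _ => mul_comm _ _
  right_inv := fun c => by
    funext i
    show (∑ j, c j * E i j) = c i
    have : ∀ j, c j * E i j = if i = j then c j else 0 := by
      intro j; unfold E; split <;> simp
    simp only [this]
    simp [Finset.sum_ite_eq]

end Std

section QFCount
variable {k : ℕ}

def iota {k : ℕ} (x : Fin k → ZMod 2) : Fin (k+1) → ZMod 2 := Fin.snoc x 0

lemma iota_additive (x y : Fin k → ZMod 2) : iota (x + y) = iota x + iota y := by
  funext j
  refine Fin.lastCases ?_ (fun i => ?_) j <;>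
    simp [iota, Fin.snoc_last, Fin.snoc_castSucc]

lemma iota_castSucc (x : Fin k → ZMod 2) (i : Fin k) : iota x i.castSucc = x i := by
  simp [iota, Fin.snoc_castSucc]

lemma iota_last (x : Fin k → ZMod 2) : iota x (Fin.last k) = 0 := by
  simp [iota, Fin.snoc_last]

lemma init_additive (x y : Fin (k+1) → ZMod 2) : Fin.init (x + y) = Fin.init x + Fin.init y := by
  funext i; simp [Fin.init]

lemma elast_castSucc (i : Fin k) : E (Fin.last k) i.castSucc = 0 := by
  unfold E
  rw [if_neg]
  exact fun h => (Fin.castSucc_lt_last i).ne' h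

lemma elast_last : E (Fin.last k) (Fin.last k) = 1 := by simp [E]

lemma isQF_mul_additive {L1 L2 : (Fin k → ZMod 2) → ZMod 2}
    (h1 : ∀ x y, L1 (x + y) = L1 x + L1 y) (h2 : ∀ x y, L2 (x + y) = L2 x + L2 y) :
    IsQF (fun x => L1 x * L2 x) := by
  have h01 : L1 0 = 0 := by have := h1 0 0; simpa using this.symm
  have h02 : L2 0 = 0 := by have := h2 0 0; simpa using this.symm
  refine ⟨by simp [h01, h02], fun x y z => ?_⟩
  simp only [h1, h2]
  have : ∀ a b c d e f : ZMod 2,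
      (a+b+c)*(d+e+f) = (a+b)*(d+e)+(a+c)*(d+f)+(b+c)*(e+f)+a*d+b*e+c*f := by decide
  exact this _ _ _ _ _ _

/-- the reconstruction function for the backward direction -/
def qrec (q' : (Fin k → ZMod 2) → ZMod 2) (d : ZMod 2) (b : Fin k → ZMod 2) :
    (Fin (k+1) → ZMod 2) → ZMod 2 :=
  fun x => q' (Fin.init x) + x (Fin.last k) * d + x (Fin.last k) * ∑ i, b i * x i.castSucc

lemma qrec_isQF {q' : (Fin k → ZMod 2) → ZMod 2} (hq' : IsQF q') (d : ZMod 2)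
    (b : Fin k → ZMod 2) : IsQF (qrec q' d b) := by
  have hA : IsQF (fun x : Fin (k+1) → ZMod 2 => q' (Fin.init x)) :=
    hq'.comp init_additive
  have hB : IsQF (fun x : Fin (k+1) → ZMod 2 => x (Fin.last k) * d) := by
    apply isQF_of_additive
    intro x y; simp [add_mul]
  have hC : IsQF (fun x : Fin (k+1) → ZMod 2 => x (Fin.last k) * ∑ i, b i * x i.castSucc) := by
    apply isQF_mul_additive
    · intro x y; simp
    · intro x y; simp only [Pi.add_apply, mul_add]; rw [Finset.sum_add_distrib]
  exact (hA.add hB).add hC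

/-- the key recursion equivalence for quadratic forms -/
def qfRecEquiv (k : ℕ) :
    {q : (Fin (k+1) → ZMod 2) → ZMod 2 // IsQF q} ≃
      ({q : (Fin k → ZMod 2) → ZMod 2 // IsQF q} × (ZMod 2 × (Fin k → ZMod 2))) where
  toFun q := ⟨⟨fun y => q.1 (iota y), q.2.comp iota_additive⟩,
    q.1 (E (Fin.last k)), fun i => polar q.1 (E (Fin.last k)) (iota (E i))⟩
  invFun t := ⟨qrec t.1.1 t.2.1 t.2.2, qrec_isQF t.1.2 _ _⟩
  left_inv := fun ⟨q, hq⟩ => by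
    apply Subtype.ext
    funext x
    show qrec _ _ _ x = q x
    unfold qrec
    simp only
    rcases zmod2_cases (x (Fin.last k)) with h | h
    · have hx : iota (Fin.init x) = x := by
        funext j
        refine Fin.lastCases ?_ (fun i => ?_) j
        · rw [iota_last, h]
        · rw [iota_castSucc]; rfl
      rw [h, hx]
      ring
    · have hx : x = E (Fin.last k) + iota (Fin.init x) := by
        funext j
        refine Fin.lastCases ?_ (fun i => ?_) j
        · rw [Pi.add_apply, iota_last, elast_last, h]; rfl
        · rw [Pi.add_apply, iota_castSucc, elast_castSucc]
          show x i.castSucc = 0 + Fin.init x i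
          rw [zero_add]; rfl
      have key : q x = q (E (Fin.last k)) + q (iota (Fin.init x)) +
          polar q (E (Fin.last k)) (iota (Fin.init x)) := by
        conv_lhs => rw [hx]
        exact q_add q _ _
      have hg : ∀ u v : Fin k → ZMod 2,
          polar q (E (Fin.last k)) (iota (u + v)) =
            polar q (E (Fin.last k)) (iota u) + polar q (E (Fin.last k)) (iota v) := by
        intro u v; rw [iota_additive]; exact polar_add_right hq _ _ _
      have hsum : polar q (E (Fin.last k)) (iota (Fin.init x)) =
          ∑ i, (Fin.init x) i * polar q (E (Fin.last k)) (iota (E i)) :=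
        addf_apply (l := fun u => polar q (E (Fin.last k)) (iota u)) hg (Fin.init x)
      rw [key, h, hsum]
      have : ∑ i, polar q (E (Fin.last k)) (iota (E i)) * x i.castSucc =
          ∑ i, (Fin.init x) i * polar q (E (Fin.last k)) (iota (E i)) :=
        Finset.sum_congr rfl fun i _ => mul_comm _ _
      rw [this]
      have zl : ∀ a b c : ZMod 2, a + 1 * b + 1 * c = b + a + c := by decide
      exact zl _ _ _
  right_inv := fun ⟨⟨q', hq'⟩, d, b⟩ => by
    have hbase : ∀ y : Fin k → ZMod 2, qrec q' d b (iota y) = q' y := by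
      intro y
      unfold qrec
      rw [iota_last]
      have hin : Fin.init (iota y) = y := funext fun i => iota_castSucc y i
      rw [hin]
      ring
    have helast : qrec q' d b (E (Fin.last k)) = d := by
      unfold qrec
      have h1 : Fin.init (E (Fin.last k)) = (0 : Fin k → ZMod 2) := by
        funext i; exact elast_castSucc i
      rw [h1, hq'.1, elast_last]
      have h2 : ∑ i, b i * E (Fin.last k) i.castSucc = 0 := by
        apply Finset.sum_eq_zero; intro i _; rw [elast_castSucc]; ring
      rw [h2]
      ring
    refine Prod.ext (Subtype.ext ?_) (Prod.ext ?_ ?_)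
    · funext y
      show qrec q' d b (iota y) = q' y
      exact hbase y
    · show qrec q' d b (E (Fin.last k)) = d
      exact helast
    · funext i
      show polar (qrec q' d b) (E (Fin.last k)) (iota (E i)) = b i
      have hmix : qrec q' d b (E (Fin.last k) + iota (E i)) = q' (E i) + d + b i := by
        unfold qrec
        have hlast : (E (Fin.last k) + iota (E i)) (Fin.last k) = 1 := by
          rw [Pi.add_apply, elast_last, iota_last, add_zero]
        have hinit : Fin.init (E (Fin.last k) + iota (E i)) = E i := by
          funext j
          show (E (Fin.last k) + iota (E i)) j.castSucc = E i j
          rw [Pi.add_apply, elast_castSucc, iota_castSucc, zero_add]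
        have hs : ∑ j, b j * (E (Fin.last k) + iota (E i)) j.castSucc = b i := by
          have : ∀ j, b j * (E (Fin.last k) + iota (E i)) j.castSucc
              = if i = j then b j else 0 := by
            intro j
            rw [Pi.add_apply, elast_castSucc, iota_castSucc, zero_add]
            unfold E; split <;> simp
          simp only [this]
          simp [Finset.sum_ite_eq]
        rw [hlast, hinit, hs]
        ring
      unfold polar
      rw [hmix, helast, hbase (E i)]
      have : ∀ a c e : ZMod 2, (a + c + e) + c + a = e := by decide
      exact this _ _ _

end QFCount

section Cards

/-- triangular number as a sum -/
def tri (k : ℕ) : ℕ := ∑ i ∈ Finset.range (k+1), i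

lemma tri_succ (k : ℕ) : tri (k+1) = tri k + (k+1) := Finset.sum_range_succ _ _

lemma card_QF_std (k : ℕ) :
    Nat.card {q : (Fin k → ZMod 2) → ZMod 2 // IsQF q} = 2 ^ tri k := by
  induction k with
  | zero =>
      have hu : ∀ q : {q : (Fin 0 → ZMod 2) → ZMod 2 // IsQF q},
          q = ⟨fun _ => 0, ⟨rfl, fun x y z => by simp⟩⟩ := by
        intro ⟨q, hq⟩
        apply Subtype.ext
        funext x
        have hx : x = 0 := Subsingleton.elim _ _
        show q x = 0
        rw [hx, hq.1]
      haveI : Unique {q : (Fin 0 → ZMod 2) → ZMod 2 // IsQF q} :=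
        ⟨⟨⟨fun _ => 0, ⟨rfl, fun x y z => by simp⟩⟩⟩, hu⟩
      simp [Nat.card_unique, tri]
  | succ k ih =>
      rw [Nat.card_congr (qfRecEquiv k), Nat.card_prod, Nat.card_prod, ih]
      have h2 : Nat.card (ZMod 2) = 2 := by
        rw [Nat.card_eq_fintype_card, ZMod.card]
      have hf : Nat.card (Fin k → ZMod 2) = 2 ^ k := by
        rw [Nat.card_pi]
        simp [h2]
      rw [h2, hf, tri_succ, pow_add]
      ring

/-- transport of quadratic forms along a linear equivalence -/
def qfSubtypeEquiv {M N : Type*} [AddCommGroup M] [Module (ZMod 2) M]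
    [AddCommGroup N] [Module (ZMod 2) N] (e : M ≃ₗ[ZMod 2] N) :
    {q : M → ZMod 2 // IsQF q} ≃ {q : N → ZMod 2 // IsQF q} where
  toFun q := ⟨fun y => q.1 (e.symm y), q.2.comp (fun x y => by rw [map_add])⟩
  invFun q := ⟨fun x => q.1 (e x), q.2.comp (fun x y => by rw [map_add])⟩
  left_inv q := by apply Subtype.ext; funext x; simp
  right_inv q := by apply Subtype.ext; funext y; simp

def lfSubtypeEquiv {M N : Type*} [AddCommGroup M] [Module (ZMod 2) M]
    [AddCommGroup N] [Module (ZMod 2) N] (e : M ≃ₗ[ZMod 2] N) :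
    {l : M → ZMod 2 // ∀ x y, l (x + y) = l x + l y} ≃
      {l : N → ZMod 2 // ∀ x y, l (x + y) = l x + l y} where
  toFun l := ⟨fun y => l.1 (e.symm y), fun x y => by
    show l.1 (e.symm (x + y)) = _
    rw [map_add]; exact l.2 _ _⟩
  invFun l := ⟨fun x => l.1 (e x), fun x y => by
    show l.1 (e (x + y)) = _
    rw [map_add]; exact l.2 _ _⟩
  left_inv l := by apply Subtype.ext; funext x; simp
  right_inv l := by apply Subtype.ext; funext y; simp

variable {M : Type*} [AddCommGroup M] [Module (ZMod 2) M] [Module.Finite (ZMod 2) M]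

lemma card_QF (M : Type*) [AddCommGroup M] [Module (ZMod 2) M] [Module.Finite (ZMod 2) M] :
    Nat.card {q : M → ZMod 2 // IsQF q} = 2 ^ tri (Module.finrank (ZMod 2) M) := by
  have e := (Module.finBasis (ZMod 2) M).equivFun
  rw [Nat.card_congr (qfSubtypeEquiv e), card_QF_std]

lemma card_LF (M : Type*) [AddCommGroup M] [Module (ZMod 2) M] [Module.Finite (ZMod 2) M] :
    Nat.card {l : M → ZMod 2 // ∀ x y, l (x + y) = l x + l y}
      = 2 ^ Module.finrank (ZMod 2) M := by
  have e := (Module.finBasis (ZMod 2) M).equivFun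
  rw [Nat.card_congr (lfSubtypeEquiv e), Nat.card_congr (lfEquivStd _), Nat.card_pi]
  have h2 : Nat.card (ZMod 2) = 2 := by rw [Nat.card_eq_fintype_card, ZMod.card]
  simp [h2]

end Cards

section GSum

lemma finite_of_module_finite (M : Type*) [AddCommGroup M] [Module (ZMod 2) M]
    [Module.Finite (ZMod 2) M] : Finite M :=
  Finite.of_equiv _ ((Module.finBasis (ZMod 2) M).equivFun).symm.toEquiv

lemma card_module (M : Type*) [AddCommGroup M] [Module (ZMod 2) M]
    [Module.Finite (ZMod 2) M] : Nat.card M = 2 ^ Module.finrank (ZMod 2) M := by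
  rw [Nat.card_congr ((Module.finBasis (ZMod 2) M).equivFun).toEquiv, Nat.card_pi]
  have h2 : Nat.card (ZMod 2) = 2 := by rw [Nat.card_eq_fintype_card, ZMod.card]
  simp [h2]

lemma finite_submodules (M : Type*) [AddCommGroup M] [Module (ZMod 2) M]
    [Module.Finite (ZMod 2) M] : Finite (Submodule (ZMod 2) M) := by
  haveI : Finite M := finite_of_module_finite M
  exact Finite.of_injective (fun V => (V : Set M)) SetLike.coe_injective

noncomputable instance fintypeSubmodules (M : Type*) [AddCommGroup M] [Module (ZMod 2) M]
    [Module.Finite (ZMod 2) M] : Fintype (Submodule (ZMod 2) M) := by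
  haveI := finite_submodules M
  exact Fintype.ofFinite _

lemma sub_eq_add' {M : Type*} [AddCommGroup M] [Module (ZMod 2) M] (x y : M) :
    x - y = x + y := by
  have : -y = y := neg_eq_of_add_eq_zero_left (zmod2_addself y)
  rw [sub_eq_add_neg, this]

lemma card_fiber_one {M : Type*} [AddCommGroup M] [Module (ZMod 2) M]
    [Module.Finite (ZMod 2) M] (f : M →ₗ[ZMod 2] ZMod 2) (x₀ : M) (hx₀ : f x₀ = 1) :
    Nat.card {c : M // f c = 1} = 2 ^ (Module.finrank (ZMod 2) M - 1) := by
  haveI : Finite M := finite_of_module_finite M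
  have e : {c : M // f c = 1} ≃ {c : M // f c = 0} :=
    { toFun := fun c => ⟨c.1 + x₀, by rw [map_add, c.2, hx₀]; decide⟩
      invFun := fun c => ⟨c.1 + x₀, by rw [map_add, c.2, hx₀]; decide⟩
      left_inv := fun c => by
        apply Subtype.ext; show c.1 + x₀ + x₀ = c.1
        rw [add_assoc, zmod2_addself, add_zero]
      right_inv := fun c => by
        apply Subtype.ext; show c.1 + x₀ + x₀ = c.1
        rw [add_assoc, zmod2_addself, add_zero] }
  have eker : {c : M // f c = 0} ≃ LinearMap.ker f :=
    { toFun := fun c => ⟨c.1, LinearMap.mem_ker.2 c.2⟩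
      invFun := fun c => ⟨c.1, LinearMap.mem_ker.1 c.2⟩
      left_inv := fun c => rfl
      right_inv := fun c => rfl }
  rw [Nat.card_congr (e.trans eker), card_module (LinearMap.ker f)]
  congr 1
  have hrange : LinearMap.range f = ⊤ := by
    rw [eq_top_iff]
    intro c _
    rcases zmod2_cases c with rfl | rfl
    · exact zero_mem _
    · exact ⟨x₀, hx₀⟩
  have h := LinearMap.finrank_range_add_finrank_ker f
  rw [hrange, finrank_top] at h
  have h1 : Module.finrank (ZMod 2) (ZMod 2) = 1 := Module.finrank_self _
  omega

variable {M : Type*} [AddCommGroup M] [Module (ZMod 2) M]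

/-- bijection between subspaces over `W` transverse to the hyperplane and quotient classes -/
lemma card_fiber_subspaces (f : M →ₗ[ZMod 2] ZMod 2) (W : Submodule (ZMod 2) M)
    (hW : W ≤ LinearMap.ker f) :
    Nat.card {V : Submodule (ZMod 2) M // ¬ V ≤ LinearMap.ker f ∧ V ⊓ LinearMap.ker f = W}
      = Nat.card {c : M ⧸ W // W.liftQ f hW c = 1} := by
  set H := LinearMap.ker f with hH
  have fone : ∀ (V : {V : Submodule (ZMod 2) M // ¬ V ≤ H ∧ V ⊓ H = W}) (u : M),
      u ∈ V.1 → u ∉ H → f u = 1 := by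
    intro V u hu1 hu2
    rcases zmod2_cases (f u) with h | h
    · exact absurd (LinearMap.mem_ker.2 h) hu2
    · exact h
  set g : {V : Submodule (ZMod 2) M // ¬ V ≤ H ∧ V ⊓ H = W} →
      {c : M ⧸ W // W.liftQ f hW c = 1} := fun V =>
    ⟨Submodule.Quotient.mk (SetLike.not_le_iff_exists.1 V.2.1).choose, by
      rw [Submodule.liftQ_apply]
      exact fone V _ (SetLike.not_le_iff_exists.1 V.2.1).choose_spec.1
        (SetLike.not_le_iff_exists.1 V.2.1).choose_spec.2⟩ with hg
  apply Nat.card_eq_of_bijective g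
  constructor
  · -- injective
    rintro V V' hVV'
    set u := (SetLike.not_le_iff_exists.1 V.2.1).choose with hu
    set u' := (SetLike.not_le_iff_exists.1 V'.2.1).choose with hu'
    have huV : u ∈ V.1 := (SetLike.not_le_iff_exists.1 V.2.1).choose_spec.1
    have huH : u ∉ H := (SetLike.not_le_iff_exists.1 V.2.1).choose_spec.2
    have huV' : u' ∈ V'.1 := (SetLike.not_le_iff_exists.1 V'.2.1).choose_spec.1
    have huH' : u' ∉ H := (SetLike.not_le_iff_exists.1 V'.2.1).choose_spec.2
    have hq : (Submodule.Quotient.mk u : M ⧸ W) = Submodule.Quotient.mk u' :=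
      congrArg Subtype.val hVV'
    have huu' : u + u' ∈ W := by
      rw [← sub_eq_add']
      exact (Submodule.Quotient.eq W).1 hq
    -- symmetric argument
    have key : ∀ (A B : {V : Submodule (ZMod 2) M // ¬ V ≤ H ∧ V ⊓ H = W})
        (a b : M), a ∈ A.1 → a ∉ H → b ∈ B.1 → b ∉ H → a + b ∈ W →
        A.1 ≤ B.1 := by
      rintro A B a b haA haH hbB hbH hab v hv
      rcases zmod2_cases (f v) with h | h
      · have : v ∈ A.1 ⊓ H := ⟨hv, LinearMap.mem_ker.2 h⟩
        rw [A.2.2] at this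
        exact (le_trans (le_of_eq B.2.2.symm) inf_le_left : W ≤ B.1) this
      · have hva : v + a ∈ A.1 ⊓ H := by
          refine ⟨A.1.add_mem hv haA, LinearMap.mem_ker.2 ?_⟩
          rw [map_add, h, fone A a haA haH]; decide
        rw [A.2.2] at hva
        have hWB : W ≤ B.1 := le_trans (le_of_eq B.2.2.symm) inf_le_left
        have habel : (v + a) + (a + b) + b = v + (a + a) + (b + b) := by abel
        have : v = (v + a) + (a + b) + b := by
          rw [habel, zmod2_addself, zmod2_addself, add_zero, add_zero]
        rw [this]
        exact B.1.add_mem (B.1.add_mem (hWB hva) (hWB hab)) hbB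
    apply Subtype.ext
    exact le_antisymm (key V V' u u' huV huH huV' huH' huu')
      (key V' V u' u huV' huH' huV huH (by rwa [add_comm]))
  · -- surjective
    rintro ⟨c, hc⟩
    obtain ⟨u₀, hu₀⟩ := Submodule.Quotient.mk_surjective W c
    have hfu₀ : f u₀ = 1 := by
      rw [← Submodule.liftQ_apply W f (h := hW), hu₀, hc]
    have hu₀H : u₀ ∉ H := fun h => by
      rw [LinearMap.mem_ker.1 h] at hfu₀; exact absurd hfu₀ (by decide)
    set V : Submodule (ZMod 2) M := W ⊔ Submodule.span (ZMod 2) {u₀} with hV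
    have hmem : ∀ v : M, v ∈ V → v ∈ W ∨ v + u₀ ∈ W := by
      intro v hv
      rw [hV, Submodule.mem_sup] at hv
      obtain ⟨w, hw, s, hs, rfl⟩ := hv
      rw [Submodule.mem_span_singleton] at hs
      obtain ⟨a, rfl⟩ := hs
      rcases zmod2_cases a with rfl | rfl
      · left; rwa [zero_smul, add_zero]
      · right
        rw [one_smul, add_assoc, zmod2_addself, add_zero]
        exact hw
      
    have hu₀V : u₀ ∈ V := Submodule.mem_sup_right (Submodule.mem_span_singleton_self u₀)
    have hVnle : ¬ V ≤ H := fun h => hu₀H (h hu₀V)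
    have hVW : V ⊓ H = W := by
      apply le_antisymm
      · rintro v ⟨hvV, hvH⟩
        rcases hmem v hvV with h | h
        · exact h
        · exfalso
          have : f (v + u₀) = 1 := by
            rw [map_add, LinearMap.mem_ker.1 hvH, hfu₀, zero_add]
          rw [LinearMap.mem_ker.1 (hW h)] at this
          exact absurd this (by decide)
      · exact le_inf le_sup_left hW
    refine ⟨⟨V, hVnle, hVW⟩, ?_⟩
    apply Subtype.ext
    show (Submodule.Quotient.mk _ : M ⧸ W) = c
    set u := (SetLike.not_le_iff_exists.1 (⟨V, hVnle, hVW⟩ :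
      {V : Submodule (ZMod 2) M // ¬ V ≤ H ∧ V ⊓ H = W}).2.1).choose with hu
    have huV : u ∈ V := (SetLike.not_le_iff_exists.1 hVnle).choose_spec.1
    have huH : u ∉ H := (SetLike.not_le_iff_exists.1 hVnle).choose_spec.2
    rcases hmem u huV with h | h
    · exact absurd (hW h) huH
    · rw [← hu₀, Submodule.Quotient.eq, sub_eq_add']
      exact h

end GSum

section GSum2

lemma finrank_ker_of_one {M : Type*} [AddCommGroup M] [Module (ZMod 2) M]
    [Module.Finite (ZMod 2) M] (f : M →ₗ[ZMod 2] ZMod 2) (x₀ : M) (hx₀ : f x₀ = 1) :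
    Module.finrank (ZMod 2) (LinearMap.ker f) + 1 = Module.finrank (ZMod 2) M := by
  have hrange : LinearMap.range f = ⊤ := by
    rw [eq_top_iff]
    intro c _
    rcases zmod2_cases c with rfl | rfl
    · exact zero_mem _
    · exact ⟨x₀, hx₀⟩
  have h := LinearMap.finrank_range_add_finrank_ker f
  rw [hrange, finrank_top] at h
  have h1 : Module.finrank (ZMod 2) (ZMod 2) = 1 := Module.finrank_self _
  omega

lemma finrank_transverse {M : Type*} [AddCommGroup M] [Module (ZMod 2) M]
    [Module.Finite (ZMod 2) M] (f : M →ₗ[ZMod 2] ZMod 2) (V W : Submodule (ZMod 2) M)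
    (h1 : ¬ V ≤ LinearMap.ker f) (h2 : V ⊓ LinearMap.ker f = W) :
    Module.finrank (ZMod 2) V = Module.finrank (ZMod 2) W + 1 := by
  obtain ⟨u, huV, huH⟩ := SetLike.not_le_iff_exists.1 h1
  have hfu : f u = 1 := by
    rcases zmod2_cases (f u) with h | h
    · exact absurd (LinearMap.mem_ker.2 h) huH
    · exact h
  set f' := f.comp V.subtype with hf'
  have hx : f' ⟨u, huV⟩ = 1 := hfu
  have hk := finrank_ker_of_one f' ⟨u, huV⟩ hx
  have hker : LinearMap.ker f' = Submodule.comap V.subtype (LinearMap.ker f) :=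
    LinearMap.ker_comp _ _
  have hmap : (Submodule.comap V.subtype (LinearMap.ker f)).map V.subtype
      = V ⊓ LinearMap.ker f := Submodule.map_comap_subtype _ _
  have hfr : Module.finrank (ZMod 2) (LinearMap.ker f')
      = Module.finrank (ZMod 2) W := by
    rw [hker, ← Submodule.finrank_map_subtype_eq V, hmap, h2]
  omega

lemma sum_tri_subspaces (m : ℕ) : ∀ (M : Type) [AddCommGroup M] [Module (ZMod 2) M]
    [Module.Finite (ZMod 2) M], Module.finrank (ZMod 2) M = m →
    (∑ V : Submodule (ZMod 2) M, 2 ^ tri (Module.finrank (ZMod 2) V))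
      = ∏ k ∈ Finset.range m, (2 ^ (k+1) + 1) := by
  induction m with
  | zero =>
      intro M _ _ _ hm
      haveI : Subsingleton M := by
        rw [← Module.finrank_zero_iff (R := ZMod 2)]; exact hm
      haveI : Unique (Submodule (ZMod 2) M) :=
        ⟨⟨⊥⟩, fun V => by apply Submodule.ext; intro x; simp [Subsingleton.elim x 0]⟩
      have h1 : ∀ V : Submodule (ZMod 2) M, (2:ℕ) ^ tri (Module.finrank (ZMod 2) V) = 1 := by
        intro V
        have : Module.finrank (ZMod 2) V = 0 := by
          rw [Module.finrank_zero_iff (R := ZMod 2)]; infer_instance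
        simp [this, tri]
      rw [Finset.sum_congr rfl (fun V _ => h1 V)]
      simp
  | succ m ih =>
      intro M _ _ _ hm
      classical
      set b := Module.finBasis (ZMod 2) M with hb
      set i₀ : Fin (Module.finrank (ZMod 2) M) := ⟨0, by omega⟩ with hi₀
      set f := b.coord i₀ with hf
      have hx₀ : f (b i₀) = 1 := by
        rw [hf, Module.Basis.coord_apply, Module.Basis.repr_self, Finsupp.single_eq_same]
      set H := LinearMap.ker f with hH
      have hfrH : Module.finrank (ZMod 2) H = m := by
        have h1 := finrank_ker_of_one f (b i₀) hx₀
        rw [← hH] at h1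
        omega
      -- part A : subspaces contained in H
      have hA : ∀ (g : ℕ → ℕ),
          (∑ V ∈ Finset.univ.filter (fun V : Submodule (ZMod 2) M => V ≤ H),
            g (Module.finrank (ZMod 2) V))
          = ∑ W : Submodule (ZMod 2) H, g (Module.finrank (ZMod 2) W) := by
        intro g
        rw [Finset.sum_subtype (Finset.univ.filter (fun V : Submodule (ZMod 2) M => V ≤ H))
          (p := fun V : Submodule (ZMod 2) M => V ≤ H) (by simp)
          (fun V => g (Module.finrank (ZMod 2) V))]
        rw [← Equiv.sum_comp (Submodule.MapSubtype.orderIso H).toEquiv]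
        apply Finset.sum_congr rfl
        intro W _
        congr 1
        exact Submodule.finrank_map_subtype_eq H W
      have hAval : (∑ V ∈ Finset.univ.filter (fun V : Submodule (ZMod 2) M => V ≤ H),
            2 ^ tri (Module.finrank (ZMod 2) V))
          = ∏ k ∈ Finset.range m, (2 ^ (k+1) + 1) := by
        rw [hA (fun d => 2 ^ tri d)]
        exact ih H hfrH
      -- part B : transverse subspaces
      have hB : (∑ V ∈ Finset.univ.filter (fun V : Submodule (ZMod 2) M => ¬ V ≤ H),
            2 ^ tri (Module.finrank (ZMod 2) V))
          = 2 ^ (m+1) * ∏ k ∈ Finset.range m, (2 ^ (k+1) + 1) := by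
        have hmaps : ∀ V ∈ Finset.univ.filter (fun V : Submodule (ZMod 2) M => ¬ V ≤ H),
            V ⊓ H ∈ Finset.univ.filter (fun V : Submodule (ZMod 2) M => V ≤ H) := by
          intro V _; simp [inf_le_right]
        rw [← Finset.sum_fiberwise_of_maps_to hmaps]
        have hinner : ∀ W ∈ Finset.univ.filter (fun V : Submodule (ZMod 2) M => V ≤ H),
            (∑ V ∈ (Finset.univ.filter
                (fun V : Submodule (ZMod 2) M => ¬ V ≤ H)).filter
                (fun V => V ⊓ H = W),
              2 ^ tri (Module.finrank (ZMod 2) V))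
            = 2 ^ (m+1) * 2 ^ tri (Module.finrank (ZMod 2) W) := by
          intro W hWmem
          have hWH : W ≤ H := by simpa using hWmem
          have hd : Module.finrank (ZMod 2) W ≤ m := by
            rw [← hfrH]
            exact Submodule.finrank_mono hWH
          have hconst : ∀ V ∈ (Finset.univ.filter
              (fun V : Submodule (ZMod 2) M => ¬ V ≤ H)).filter (fun V => V ⊓ H = W),
              (2:ℕ) ^ tri (Module.finrank (ZMod 2) V)
              = 2 ^ tri (Module.finrank (ZMod 2) W + 1) := by
            intro V hV
            simp only [Finset.mem_filter, Finset.mem_univ, true_and] at hV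
            rw [finrank_transverse f V W hV.1 hV.2]
          rw [Finset.sum_congr rfl hconst, Finset.sum_const, smul_eq_mul]
          -- count the fiber
          have hcard : ((Finset.univ.filter
              (fun V : Submodule (ZMod 2) M => ¬ V ≤ H)).filter
              (fun V => V ⊓ H = W)).card
              = 2 ^ (m - Module.finrank (ZMod 2) W) := by
            rw [Finset.filter_filter]
            have h1 : (Finset.univ.filter
                (fun V : Submodule (ZMod 2) M => ¬ V ≤ H ∧ V ⊓ H = W)).card
                = Nat.card {V : Submodule (ZMod 2) M // ¬ V ≤ H ∧ V ⊓ H = W} := by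
              rw [Nat.card_eq_fintype_card, Fintype.card_subtype]
            rw [h1, card_fiber_subspaces f W hWH]
            have hq1 : W.liftQ f hWH (Submodule.Quotient.mk (b i₀)) = 1 := by
              rw [Submodule.liftQ_apply]; exact hx₀
            rw [card_fiber_one (W.liftQ f hWH) (Submodule.Quotient.mk (b i₀)) hq1]
            congr 1
            have hq := Submodule.finrank_quotient_add_finrank W
            omega
          rw [hcard, tri_succ, ← pow_add, ← pow_add]
          congr 1
          omega
        rw [Finset.sum_congr rfl hinner, ← Finset.mul_sum, hAval]
      rw [← Finset.sum_filter_add_sum_filter_not Finset.univ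
        (fun V : Submodule (ZMod 2) M => V ≤ H), hAval, hB, Finset.prod_range_succ]
      ring

end GSum2


section Main

variable {n : ℕ}

abbrev LFt {n : ℕ} (V : Submodule (ZMod 2) (F2 n)) :=
  {l : V → ZMod 2 // ∀ x y, l (x + y) = l x + l y}

abbrev QFt {n : ℕ} (V : Submodule (ZMod 2) (F2 n)) := {q : V → ZMod 2 // IsQF q}

abbrev Param (n : ℕ) := Σ V : Submodule (ZMod 2) (F2 n), (F2 n ⧸ V) × LFt V × QFt V

def sigmaFun {n : ℕ} (V : Submodule (ZMod 2) (F2 n)) (t : F2 n)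
    (l q : V → ZMod 2) : F2 n → ℂ :=
  fun x => if hx : x + t ∈ V then ph (l ⟨x + t, hx⟩) (q ⟨x + t, hx⟩) else 0

def lineOf {n : ℕ} (p : Param n) : Submodule ℂ (F2 n → ℂ) :=
  Submodule.span ℂ {sigmaFun p.1 (Quotient.out p.2.1) p.2.2.1.1 p.2.2.2.1}

lemma self_mem_aux (V : Submodule (ZMod 2) (F2 n)) (t : F2 n) : t + t ∈ V := by
  rw [zmod2_addself]; exact V.zero_mem

lemma sigmaFun_self {V : Submodule (ZMod 2) (F2 n)} {t : F2 n} {l q : V → ZMod 2}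
    (hl : ∀ x y, l (x + y) = l x + l y) (hq : IsQF q) :
    sigmaFun V t l q t = 1 := by
  have h0 : l 0 = 0 := by have := hl 0 0; simpa using this.symm
  rw [sigmaFun, dif_pos (self_mem_aux V t)]
  have hv : (⟨t + t, self_mem_aux V t⟩ : V) = 0 := by
    apply Subtype.ext; exact zmod2_addself t
  rw [hv, h0, hq.1]
  simp [ph]

lemma sigmaFun_ne_zero {V : Submodule (ZMod 2) (F2 n)} {t : F2 n} {l q : V → ZMod 2}
    (hl : ∀ x y, l (x + y) = l x + l y) (hq : IsQF q) :
    sigmaFun V t l q ≠ 0 := by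
  intro h
  have := congrFun h t
  rw [sigmaFun_self hl hq] at this
  simp at this

lemma sigmaFun_support {V : Submodule (ZMod 2) (F2 n)} {t : F2 n} {l q : V → ZMod 2}
    (x : F2 n) : sigmaFun V t l q x ≠ 0 ↔ x + t ∈ V := by
  constructor
  · intro h
    by_contra hx
    rw [sigmaFun, dif_neg hx] at h
    exact h rfl
  · intro hx
    rw [sigmaFun, dif_pos hx]
    exact ph_ne_zero _ _

/-- `lineOf p` is a stabilizer line -/
lemma lineOf_mem (p : Param n) : lineOf p ∈ stabLines n := by
  rcases p with ⟨V, c, ⟨l, hl⟩, ⟨q, hq⟩⟩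
  show Submodule.span ℂ {sigmaFun V (Quotient.out c) l q} ∈ _
  set t := Quotient.out c with ht
  have hl0 : l 0 = 0 := by have := hl 0 0; simpa using this.symm
  obtain ⟨U, hU⟩ := Submodule.exists_isCompl V
  set π := V.linearProjOfIsCompl U hU with hπ
  set s : V := π t with hs
  set A : Set (F2 n) := {x | x + t ∈ V} with hA
  set l₀ : F2 n → ZMod 2 := fun x => l (π x) with hl₀
  set q₀ : F2 n → ZMod 2 := fun x => q (π x) + polar q s (π x) + l s * l (π x) with hq₀
  set τ : F2 n → ℂ :=
    fun x => if x ∈ A then Complex.I ^ (l₀ x).val * (-1:ℂ) ^ (q₀ x).val else 0 with hτ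
  have hAaff : IsAffineSubspace A := by
    constructor
    · exact ⟨t, self_mem_aux V t⟩
    · intro x hx y hy z hz
      show (x + y + z) + t ∈ V
      have : (x + y + z) + t = (x + t) + (y + t) + (z + t) := by
        have : (x + t) + (y + t) + (z + t) = x + y + z + (t + (t + t)) := by abel
        rw [this, zmod2_addself t, add_zero]
      rw [this]
      exact V.add_mem (V.add_mem hx hy) hz
  have hlin : IsLinearForm l₀ := by
    intro x y
    show l (π (x + y)) = l (π x) + l (π y)
    rw [map_add, hl]
  have hbig : IsQF q₀ := by
    have h1 : IsQF (fun x : F2 n => q (π x)) := hq.comp (fun x y => by rw [map_add])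
    have h2 : IsQF (fun x : F2 n => polar q s (π x)) :=
      isQF_of_additive (fun x y => by rw [map_add]; exact polar_add_right hq s _ _)
    have h3 : IsQF (fun x : F2 n => l s * l (π x)) :=
      isQF_of_additive (fun x y => by rw [map_add, hl, mul_add])
    exact (h1.add h2).add h3
  have hquad : IsQuadraticForm q₀ := ⟨hbig.1, hbig.2⟩
  have hstab : IsStabilizerState τ := ⟨A, l₀, q₀, hAaff, hlin, hquad, fun x => rfl⟩
  set C := ph (l s) (q s + l s) with hC
  have hCne : C ≠ 0 := ph_ne_zero _ _
  have hrel : τ = C • sigmaFun V t l q := by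
    funext x
    rw [Pi.smul_apply, smul_eq_mul]
    by_cases hx : x + t ∈ V
    · set v : V := ⟨x + t, hx⟩ with hv
      have hxd : x = (v : F2 n) + t := by
        show x = (x + t) + t
        rw [add_assoc, zmod2_addself, add_zero]
      have hπx : π x = v + s := by
        rw [hxd, map_add]
        congr 1
        exact Submodule.linearProjOfIsCompl_apply_left hU v
      have hτx : τ x = ph (l₀ x) (q₀ x) := by
        rw [hτ]
        simp only
        rw [if_pos (show x ∈ A from hx)]
        rfl
      have hl₀x : l₀ x = l s + l v := by
        show l (π x) = _
        rw [hπx, show (v + s : V) = s + v from add_comm v s, hl]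
      have hq₀x : q₀ x = (q s + l s) + q v + (l s * l v) := by
        show q (π x) + polar q s (π x) + l s * l (π x) = _
        rw [hπx, show (v + s : V) = s + v from add_comm v s]
        rw [q_add q s v, polar_add_right hq s s v, hl]
        have hss : polar q s s = 0 := by
          show q (s + s) + q s + q s = 0
          rw [zmod2_addself s, hq.1, zero_add, zmod2_addself (q s)]
        rw [hss]
        have key : ∀ A0 B P L W : ZMod 2,
            (A0 + B + P) + (0 + P) + (L * (L + W)) = (A0 + L) + B + (L * W) := by decide
        exact key _ _ _ _ _
      rw [hτx, hl₀x, hq₀x, sigmaFun, dif_pos hx]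
      exact ph_add (l s) (q s + l s) (l v) (q v)
    · rw [hτ]
      simp only
      rw [if_neg (show x ∉ A from hx), sigmaFun, dif_neg hx, mul_zero]
  refine ⟨τ, hstab, ?_⟩
  rw [hrel]
  exact (Submodule.span_singleton_smul_eq (hCne.isUnit) _).symm

end Main

section Main2

variable {n : ℕ}

lemma mk_out {W : Submodule (ZMod 2) (F2 n)} (c : F2 n ⧸ W) :
    Submodule.Quotient.mk (Quotient.out c) = c := by
  exact Quotient.out_eq c

/-- shifting a quadratic form by a translation yields a quadratic form -/
lemma shift_isQF {M : Type*} [AddCommGroup M] [Module (ZMod 2) M] {q : M → ZMod 2}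
    (h3 : Is3pt q) (t : M) : IsQF (fun v => q (t + v) + q t) := by
  constructor
  · show q (t + 0) + q t = 0
    rw [add_zero, zmod2_addself]
  · intro x y z
    simp only [← add_assoc]
    have h1 := h3 (t + x) y z
    have h2 := h3 t x y
    have h4 := h3 t x z
    have h5 := h3 t y z
    have key : ∀ A B C D Ee F G P Q R X Y Z T : ZMod 2,
        A = B + C + R + Ee + Y + Z → B = Ee + F + P + T + X + Y →
        C = Ee + G + Q + T + X + Z → D = F + G + R + T + Y + Z →
        A + T = B + T + C + T + D + T + Ee + T + F + T + G + T := by decide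
    exact key (q (t+x+y+z)) (q (t+x+y)) (q (t+x+z)) (q (t+y+z)) (q (t+x)) (q (t+y)) (q (t+z))
      (q (x+y)) (q (x+z)) (q (y+z)) (q x) (q y) (q z) (q t) h1 h2 h4 h5

lemma lineOf_injective : Function.Injective (lineOf (n := n)) := by
  rintro ⟨V, c, ⟨l, hl⟩, ⟨q, hq⟩⟩ ⟨V', c', ⟨l', hl'⟩, ⟨q', hq'⟩⟩ h
  have hspan : Submodule.span ℂ {sigmaFun V (Quotient.out c) l q}
      = Submodule.span ℂ {sigmaFun V' (Quotient.out c') l' q'} := h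
  set t := Quotient.out c with ht
  set t' := Quotient.out c' with ht'
  set σ := sigmaFun V t l q with hσdef
  set σ' := sigmaFun V' t' l' q' with hσ'def
  have hmem : σ ∈ Submodule.span ℂ {σ'} := by
    rw [← hspan]; exact Submodule.mem_span_singleton_self σ
  obtain ⟨a, ha⟩ := Submodule.mem_span_singleton.1 hmem
  have ha0 : a ≠ 0 := by
    rintro rfl
    rw [zero_smul] at ha
    exact sigmaFun_ne_zero hl hq ha.symm
  have hsupp : ∀ x, (x + t ∈ V ↔ x + t' ∈ V') := by
    intro x
    rw [← sigmaFun_support (l := l) (q := q) x, ← sigmaFun_support (l := l') (q := q') x]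
    have hx : σ x = a * σ' x := by rw [← ha]; rfl
    rw [← hσdef, ← hσ'def, hx]
    constructor
    · intro hne h0; exact hne (by rw [h0, mul_zero])
    · intro hne h0; exact hne (by rcases mul_eq_zero.1 h0 with h|h; exact absurd h ha0; exact h)
  have hVV' : V = V' := by
    have haux : ∀ (W W' : Submodule (ZMod 2) (F2 n)) (u u' : F2 n),
        (∀ x, (x + u ∈ W ↔ x + u' ∈ W')) → ∀ v ∈ W, v ∈ W' := by
      intro W W' u u' hs v hv
      have h1 : (v + u) + u ∈ W := by
        rw [add_assoc, zmod2_addself, add_zero]; exact hv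
      have h2 : (v + u) + u' ∈ W' := (hs (v + u)).1 h1
      have h3 : u + u' ∈ W' := (hs u).1 (self_mem_aux W u)
      have h4 : v = ((v + u) + u') + (u + u') := by
        have : ((v + u) + u') + (u + u') = v + (u + u) + (u' + u') := by abel
        rw [this, zmod2_addself, zmod2_addself, add_zero, add_zero]
      rw [h4]
      exact W'.add_mem h2 h3
    apply le_antisymm
    · intro v hv; exact haux V V' t t' hsupp v hv
    · intro v hv; exact haux V' V t' t (fun x => (hsupp x).symm) v hv
  subst hVV'
  have hcc' : c = c' := by
    have h1 : t + t' ∈ V := (hsupp t).1 (self_mem_aux V t)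
    rw [← mk_out c, ← mk_out c', ← ht, ← ht', Submodule.Quotient.eq, sub_eq_add']
    exact h1
  have htt' : t = t' := by rw [ht, ht', hcc']
  have ha1 : a = 1 := by
    have h1 : σ t = 1 := sigmaFun_self hl hq
    have h2 : σ' t = 1 := by rw [hσ'def, htt']; exact sigmaFun_self hl' hq'
    have := congrFun ha t
    rw [Pi.smul_apply, smul_eq_mul, h1, h2, mul_one] at this
    exact this
  have hσσ' : σ = σ' := by rw [← ha, ha1, one_smul]
  have hlq : ∀ v : V, l v = l' v ∧ q v = q' v := by
    intro v
    have hxV : (↑v + t) + t ∈ V := by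
      rw [add_assoc, zmod2_addself, add_zero]; exact v.2
    have hvec : (↑v + t) + t = (↑v : F2 n) := by
      rw [add_assoc, zmod2_addself, add_zero]
    have hvv : (⟨(↑v + t) + t, hxV⟩ : V) = v := Subtype.ext hvec
    have h1 : σ (↑v + t) = ph (l v) (q v) := by
      rw [hσdef, sigmaFun, dif_pos hxV, hvv]
    have h2 : σ' (↑v + t) = ph (l' v) (q' v) := by
      rw [hσ'def, ← htt']
      show sigmaFun V t l' q' (↑v + t) = _
      rw [sigmaFun, dif_pos hxV, hvv]
    have := h1.symm.trans ((congrFun hσσ' (↑v + t)).trans h2)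
    exact ph_inj this
  have hls : l = l' := funext fun v => (hlq v).1
  have hqs : q = q' := funext fun v => (hlq v).2
  have : (⟨c, ⟨l, hl⟩, ⟨q, hq⟩⟩ : (F2 n ⧸ V) × LFt V × QFt V)
      = ⟨c', ⟨l', hl'⟩, ⟨q', hq'⟩⟩ := by
    refine Prod.ext hcc' (Prod.ext ?_ ?_) <;> simp only
    · exact Subtype.ext hls
    · exact Subtype.ext hqs
  exact congrArg (Sigma.mk V) this

lemma lineOf_surjective (L : Submodule ℂ (F2 n → ℂ)) (hL : L ∈ stabLines n) :
    ∃ p : Param n, lineOf p = L := by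
  rw [stabLines, Set.mem_setOf_eq] at hL
  obtain ⟨σ₀, ⟨A, l, q, hAaff, hlin, hquad, hval⟩, rfl⟩ := hL
  obtain ⟨a₀, ha₀⟩ := hAaff.1
  have hl0 : l 0 = 0 := by have := hlin 0 0; simpa using this.symm
  set V : Submodule (ZMod 2) (F2 n) :=
    { carrier := {x | ∃ a ∈ A, ∃ b ∈ A, x = a + b}
      add_mem' := by
        rintro x y ⟨a, ha, b, hb, rfl⟩ ⟨u, hu, w, hw, rfl⟩
        exact ⟨a + b + u, hAaff.2 a ha b hb u hu, w, hw, by abel⟩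
      zero_mem' := ⟨a₀, ha₀, a₀, ha₀, (zmod2_addself a₀).symm⟩
      smul_mem' := by
        intro cc x hx
        rcases zmod2_cases cc with rfl | rfl
        · rw [zero_smul]
          exact ⟨a₀, ha₀, a₀, ha₀, (zmod2_addself a₀).symm⟩
        · rw [one_smul]; exact hx } with hV
  set c : F2 n ⧸ V := Submodule.Quotient.mk a₀ with hc
  set t := Quotient.out c with htdef
  have hmk : Submodule.Quotient.mk t = c := mk_out c
  have hta : t + a₀ ∈ V := by
    rw [← sub_eq_add']
    exact (Submodule.Quotient.eq V).1 (hmk.trans hc)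
  have htA : t ∈ A := by
    obtain ⟨a, ha, b, hb, hab⟩ := hta
    have : t = a + b + a₀ := by
      have h1 : t = (t + a₀) + a₀ := by rw [add_assoc, zmod2_addself, add_zero]
      rw [h1, hab]
    rw [this]
    exact hAaff.2 a ha b hb a₀ ha₀
  have hAV : ∀ x, (x ∈ A ↔ x + t ∈ V) := by
    intro x
    constructor
    · intro hx; exact ⟨x, hx, t, htA, rfl⟩
    · rintro ⟨a, ha, b, hb, hab⟩
      have : x = a + b + t := by
        have h1 : x = (x + t) + t := by rw [add_assoc, zmod2_addself, add_zero]
        rw [h1, hab]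
      rw [this]
      exact hAaff.2 a ha b hb t htA
  set lV : V → ZMod 2 := fun v => l ↑v with hlV
  have hlVa : ∀ v w : V, lV (v + w) = lV v + lV w := by
    intro v w
    show l ↑(v + w) = _
    rw [show ((v + w : V) : F2 n) = ↑v + ↑w from rfl, hlin]
  set qV : V → ZMod 2 := fun v => (q (t + ↑v) + q t) + l t * l ↑v with hqV
  have hqVq : IsQF qV := by
    have hr : IsQF (fun v : V => q (t + ↑v) + q t) :=
      (shift_isQF hquad.2 t).comp (g := fun v : V => (v : F2 n)) (fun v w => rfl)
    have hr2 : IsQF (fun v : V => l t * l ↑v) :=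
      isQF_of_additive (fun v w => by
        show l t * l ↑(v + w) = _
        rw [show ((v + w : V) : F2 n) = ↑v + ↑w from rfl, hlin, mul_add])
    exact hr.add hr2
  refine ⟨⟨V, c, ⟨lV, hlVa⟩, ⟨qV, hqVq⟩⟩, ?_⟩
  show Submodule.span ℂ {sigmaFun V t lV qV} = Submodule.span ℂ {σ₀}
  set C := ph (l t) (q t) with hC
  have hCne : C ≠ 0 := ph_ne_zero _ _
  have hrel : σ₀ = C • sigmaFun V t lV qV := by
    funext x
    rw [Pi.smul_apply, smul_eq_mul]
    by_cases hx : x ∈ A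
    · have hxV : x + t ∈ V := (hAV x).1 hx
      set v : V := ⟨x + t, hxV⟩ with hv
      have hxd : x = t + ↑v := by
        show x = t + (x + t)
        have h1 : t + (x + t) = x + (t + t) := by abel
        rw [h1, zmod2_addself, add_zero]
      rw [hval x, if_pos hx, sigmaFun, dif_pos hxV]
      show ph (l x) (q x) = C * ph (lV v) (qV v)
      have hlx : l x = l t + l ↑v := by rw [hxd, hlin]
      have hqx : q x = q t + qV v + l t * l ↑v := by
        rw [hxd]
        show q (t + ↑v) = q t + ((q (t + ↑v) + q t) + l t * l ↑v) + l t * l ↑v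
        have key : ∀ a b m : ZMod 2, a = b + ((a + b) + m) + m := by decide
        exact key _ _ _
      rw [hlx, hqx]
      exact ph_add (l t) (q t) (l ↑v) (qV v)
    · rw [hval x, if_neg hx, sigmaFun, dif_neg (fun hxV => hx ((hAV x).2 hxV)), mul_zero]
  rw [hrel]
  exact (Submodule.span_singleton_smul_eq hCne.isUnit _).symm

end Main2

/-- The number of projective stabilizer states on `n` qubits equals
`2ⁿ·∏_{k=1}^n (2^k + 1)`. -/
theorem card_stabLines (n : ℕ) (hn : 1 ≤ n) :
    (stabLines n).ncard = 2 ^ n * ∏ k ∈ Finset.Icc 1 n, (2 ^ k + 1) := by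
  classical
  rw [← Nat.card_coe_set_eq]
  have hbij : Function.Bijective
      (fun p : Param n => (⟨lineOf p, lineOf_mem p⟩ : stabLines n)) := by
    constructor
    · intro p p' h
      exact lineOf_injective (congrArg Subtype.val h)
    · rintro ⟨L, hL⟩
      obtain ⟨p, hp⟩ := lineOf_surjective L hL
      exact ⟨p, Subtype.ext hp⟩
  have hcard : Nat.card (stabLines n) = Nat.card (Param n) :=
    (Nat.card_eq_of_bijective _ hbij).symm
  rw [hcard]
  have hn' : Module.finrank (ZMod 2) (F2 n) = n := by
    rw [Module.finrank_pi]; simp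
  haveI hqf : ∀ V : Submodule (ZMod 2) (F2 n), Module.Finite (ZMod 2) (F2 n ⧸ V) := fun V =>
    Module.Finite.of_surjective V.mkQ (Submodule.mkQ_surjective V)
  haveI hfin : ∀ V : Submodule (ZMod 2) (F2 n), Fintype ((F2 n ⧸ V) × LFt V × QFt V) := by
    intro V
    haveI : Finite (F2 n ⧸ V) := finite_of_module_finite _
    exact Fintype.ofFinite _
  have h1 : Nat.card (Param n)
      = ∑ V : Submodule (ZMod 2) (F2 n), Nat.card ((F2 n ⧸ V) × LFt V × QFt V) := by
    rw [Nat.card_eq_fintype_card (α := Param n), Fintype.card_sigma]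
    exact Finset.sum_congr rfl fun V _ => (Nat.card_eq_fintype_card).symm
  have h2 : ∀ V : Submodule (ZMod 2) (F2 n),
      Nat.card ((F2 n ⧸ V) × LFt V × QFt V)
        = 2 ^ n * 2 ^ tri (Module.finrank (ZMod 2) V) := by
    intro V
    have hLF : Nat.card (LFt V) = 2 ^ Module.finrank (ZMod 2) V := card_LF V
    have hQF : Nat.card (QFt V) = 2 ^ tri (Module.finrank (ZMod 2) V) := card_QF V
    rw [Nat.card_prod, Nat.card_prod, hLF, hQF, card_module (F2 n ⧸ V)]
    have hq := Submodule.finrank_quotient_add_finrank V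
    have hd : Module.finrank (ZMod 2) V ≤ n := by
      have := Submodule.finrank_le V
      omega
    have ha : Module.finrank (ZMod 2) (F2 n ⧸ V) = n - Module.finrank (ZMod 2) V := by
      omega
    rw [ha, ← pow_add, ← pow_add, ← pow_add]
    congr 1
    omega
  rw [h1, Finset.sum_congr rfl (fun V _ => h2 V), ← Finset.mul_sum,
    sum_tri_subspaces n (F2 n) hn']
  congr 1
  rw [← Finset.Ico_add_one_right_eq_Icc, Finset.prod_Ico_eq_prod_range]
  refine (Finset.prod_congr (by congr 1) (fun k _ => ?_)).symm
  congr 1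
  rw [Nat.add_comm]

end StabPaper
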